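/- Let E be a finite-dimensional real inner product space, let f : E → ℝ be differentiable with L₁-Lipschitz gradient (L₁ > 0), let η > 0, σ² ≥ 0, and let N ≥ 1 be a natural number. On a probability space (Ω, 𝒜, μ) with a filtration ℱ₀ ⊆ ℱ₁ ⊆ ⋯ ⊆ 𝒜, let g₀, …, g_{N-1} : Ω → E be square-integrable random vectors with gₑ measurable with respect to ℱ_{e+1}, and define the iterates w₀ ∈ E (deterministic), w_{e+1} = w_e - η • g_e. Assume for each e that, almost everywhere, the conditional expectation of g_e given ℱ_e equals ∇f(w_e) and the conditional expectation of ‖g_e - ∇f(w_e)‖² given ℱ_e is at most σ². Then ∫ f(w_N) dμ ≤ f(w₀) - (η - η²L₁/2)·Σ_{e=0}^{N-1} ∫ ‖∇f(w_e)‖² dμ + (N·η²·L₁/2)·σ². -/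

import Mathlib

open MeasureTheory


local notation "⟪" x ", " y "⟫" => @inner ℝ _ _ x y

lemma descent_lemma {E : Type*} [NormedAddCommGroup E] [InnerProductSpace ℝ E] [CompleteSpace E]
    (f : E → ℝ) (hf : Differentiable ℝ f) (L : ℝ) (hL : 0 ≤ L)
    (hlip : ∀ x y : E, ‖gradient f x - gradient f y‖ ≤ L * ‖x - y‖) (x y : E) :
    f y ≤ f x + ⟪gradient f x, y - x⟫ + L / 2 * ‖y - x‖ ^ 2 := by
  set v := y - x with hv
  have key : ∀ t : ℝ, HasDerivAt (fun s : ℝ => f (x + s • v))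
      ⟪gradient f (x + t • v), v⟫ t := by
    intro t
    have h1 : HasDerivAt (fun s : ℝ => x + s • v) v t := by
      simpa using ((hasDerivAt_id t).smul_const v).const_add x
    have h2 := (hf (x + t • v)).hasGradientAt.hasFDerivAt
    have := h2.comp_hasDerivAt t h1
    simpa [InnerProductSpace.toDual_apply_apply, Function.comp_def] using this
  set φ : ℝ → ℝ := fun t => f (x + t • v) - t * ⟪gradient f x, v⟫ - t ^ 2 * (L / 2 * ‖v‖ ^ 2)
    with hφ
  have hφd : ∀ t : ℝ, HasDerivAt φ
      (⟪gradient f (x + t • v), v⟫ - ⟪gradient f x, v⟫ - 2 * t * (L / 2 * ‖v‖ ^ 2)) t := by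
    intro t
    have h3 : HasDerivAt (fun s : ℝ => s * ⟪gradient f x, v⟫) ⟪gradient f x, v⟫ t := by
      simpa using (hasDerivAt_id t).mul_const (⟪gradient f x, v⟫)
    have h4 : HasDerivAt (fun s : ℝ => s ^ 2 * (L / 2 * ‖v‖ ^ 2)) (2 * t * (L / 2 * ‖v‖ ^ 2)) t := by
      simpa using ((hasDerivAt_pow 2 t).mul_const (L / 2 * ‖v‖ ^ 2))
    exact ((key t).sub h3).sub h4
  have hanti : AntitoneOn φ (Set.Icc 0 1) := by
    refine antitoneOn_of_deriv_nonpos (convex_Icc 0 1)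
      (fun t _ => ((hφd t).continuousAt).continuousWithinAt)
      (fun t _ => ((hφd t).differentiableAt).differentiableWithinAt) ?_
    intro t ht
    rw [interior_Icc] at ht
    rw [(hφd t).deriv]
    have h5 : ⟪gradient f (x + t • v) - gradient f x, v⟫ ≤ L * t * ‖v‖ ^ 2 := by
      calc ⟪gradient f (x + t • v) - gradient f x, v⟫
          ≤ ‖gradient f (x + t • v) - gradient f x‖ * ‖v‖ := real_inner_le_norm _ _
        _ ≤ (L * ‖x + t • v - x‖) * ‖v‖ := by
            gcongr; exact hlip _ _
        _ = L * t * ‖v‖ ^ 2 := by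
            rw [add_sub_cancel_left, norm_smul, Real.norm_eq_abs, abs_of_pos ht.1]
            ring
    have h6 : ⟪gradient f (x + t • v), v⟫ - ⟪gradient f x, v⟫
        = ⟪gradient f (x + t • v) - gradient f x, v⟫ := by
      rw [inner_sub_left]
    rw [h6]
    nlinarith [h5]
  have h01 := hanti (Set.left_mem_Icc.2 zero_le_one) (Set.right_mem_Icc.2 zero_le_one) zero_le_one
  simp only [hφ] at h01
  simp only [zero_smul, add_zero, zero_mul, sub_zero, one_smul, one_mul, one_pow] at h01
  have : x + v = y := by rw [hv]; abel
  rw [this] at h01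
  linarith

lemma integral_inner_condexp_eq {E : Type*} [NormedAddCommGroup E] [InnerProductSpace ℝ E]
    [FiniteDimensional ℝ E]
    {Ω : Type*} {m m0 : MeasurableSpace Ω} {μ : Measure Ω} [IsProbabilityMeasure μ]
    (hm : m ≤ m0) (a g : Ω → E)
    (ham : StronglyMeasurable[m] a) (ha2 : MemLp a 2 μ) (hg2 : MemLp g 2 μ)
    (hc : μ[g | m] =ᵐ[μ] a) :
    ∫ ω, ⟪a ω, g ω⟫ ∂μ = ∫ ω, ‖a ω‖ ^ 2 ∂μ := by
  set b := stdOrthonormalBasis ℝ E with hb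
  have hgint : Integrable g μ := hg2.integrable one_le_two
  have haint : Integrable a μ := ha2.integrable one_le_two
  -- conditional expectation of each coordinate
  have hgi : ∀ i, μ[(fun ω => ⟪b i, g ω⟫) | m] =ᵐ[μ] fun ω => ⟪b i, a ω⟫ := by
    intro i
    refine (ae_eq_condExp_of_forall_setIntegral_eq hm (hgint.const_inner (b i))
      (fun s _ _ => (haint.const_inner (b i)).integrableOn) (fun s hs hμs => ?_)
      ((stronglyMeasurable_const.inner ham).aestronglyMeasurable)).symm
    rw [integral_inner haint.integrableOn (b i), integral_inner hgint.integrableOn (b i)]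
    congr 1
    rw [← setIntegral_condExp hm hgint hs]
    exact setIntegral_congr_ae (hm s hs) (hc.mono fun ω h _ => h.symm)
  -- integrability of coordinate products
  have hmul : ∀ i, Integrable (fun ω => ⟪b i, a ω⟫ * ⟪b i, g ω⟫) μ := by
    intro i
    have hbound : Integrable (fun ω => ‖a ω‖ ^ 2 + ‖g ω‖ ^ 2) μ :=
      ha2.norm.integrable_sq.add hg2.norm.integrable_sq
    refine Integrable.mono' hbound
      ((aestronglyMeasurable_const.inner ha2.1).mul (aestronglyMeasurable_const.inner hg2.1))
      (Filter.Eventually.of_forall fun ω => ?_)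
    have h1 : |⟪b i, a ω⟫| ≤ ‖a ω‖ := by
      simpa [b.orthonormal.1 i] using abs_real_inner_le_norm (b i) (a ω)
    have h2 : |⟪b i, g ω⟫| ≤ ‖g ω‖ := by
      simpa [b.orthonormal.1 i] using abs_real_inner_le_norm (b i) (g ω)
    have := abs_nonneg (⟪b i, a ω⟫)
    have := abs_nonneg (⟪b i, g ω⟫)
    rw [Real.norm_eq_abs, abs_mul]
    nlinarith [sq_nonneg (‖a ω‖ - ‖g ω‖), mul_le_mul h1 h2 (abs_nonneg _) (norm_nonneg _),
      norm_nonneg (a ω), norm_nonneg (g ω)]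
  have hmul2 : ∀ i, Integrable (fun ω => ⟪b i, a ω⟫ * ⟪b i, a ω⟫) μ := by
    intro i
    have hbound : Integrable (fun ω => ‖a ω‖ ^ 2) μ := ha2.norm.integrable_sq
    refine Integrable.mono' hbound
      ((aestronglyMeasurable_const.inner ha2.1).mul (aestronglyMeasurable_const.inner ha2.1))
      (Filter.Eventually.of_forall fun ω => ?_)
    have h1 : |⟪b i, a ω⟫| ≤ ‖a ω‖ := by
      simpa [b.orthonormal.1 i] using abs_real_inner_le_norm (b i) (a ω)
    rw [Real.norm_eq_abs, abs_mul]
    nlinarith [abs_nonneg (⟪b i, a ω⟫), norm_nonneg (a ω)]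
  -- per-coordinate integral identity
  have hcoord : ∀ i, ∫ ω, ⟪b i, a ω⟫ * ⟪b i, g ω⟫ ∂μ = ∫ ω, ⟪b i, a ω⟫ * ⟪b i, a ω⟫ ∂μ := by
    intro i
    have hmeas_ai : StronglyMeasurable[m] (fun ω => ⟪b i, a ω⟫) :=
      stronglyMeasurable_const.inner ham
    have hpull := condExp_mul_of_stronglyMeasurable_left (g := fun ω => ⟪b i, g ω⟫) hmeas_ai
      (by simpa [Pi.mul_def] using hmul i) (hgint.const_inner (b i))
    have key : μ[(fun ω => ⟪b i, a ω⟫ * ⟪b i, g ω⟫) | m]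
        =ᵐ[μ] fun ω => ⟪b i, a ω⟫ * ⟪b i, a ω⟫ := by
      refine (hpull.trans ?_)
      filter_upwards [hgi i] with ω hω
      simp [Pi.mul_apply, hω]
    calc ∫ ω, ⟪b i, a ω⟫ * ⟪b i, g ω⟫ ∂μ
        = ∫ ω, (μ[(fun ω => ⟪b i, a ω⟫ * ⟪b i, g ω⟫) | m]) ω ∂μ :=
          (integral_condExp hm).symm
      _ = ∫ ω, ⟪b i, a ω⟫ * ⟪b i, a ω⟫ ∂μ := integral_congr_ae key
  -- sum over coordinates
  calc ∫ ω, ⟪a ω, g ω⟫ ∂μ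
      = ∫ ω, ∑ i, ⟪a ω, b i⟫ * ⟪b i, g ω⟫ ∂μ := by
        refine integral_congr_ae (Filter.Eventually.of_forall fun ω => ?_)
        exact (b.sum_inner_mul_inner (a ω) (g ω)).symm
    _ = ∑ i, ∫ ω, ⟪a ω, b i⟫ * ⟪b i, g ω⟫ ∂μ := by
        refine integral_finset_sum _ fun i _ => ?_
        simpa [real_inner_comm] using hmul i
    _ = ∑ i, ∫ ω, ⟪a ω, b i⟫ * ⟪b i, a ω⟫ ∂μ := by
        refine Finset.sum_congr rfl fun i _ => ?_
        simpa [real_inner_comm] using hcoord i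
    _ = ∫ ω, ∑ i, ⟪a ω, b i⟫ * ⟪b i, a ω⟫ ∂μ := by
        refine (integral_finset_sum _ fun i _ => ?_).symm
        simpa [real_inner_comm] using hmul2 i
    _ = ∫ ω, ‖a ω‖ ^ 2 ∂μ := by
        refine integral_congr_ae (Filter.Eventually.of_forall fun ω => ?_)
        exact (b.sum_inner_mul_inner (a ω) (a ω)).trans (real_inner_self_eq_norm_sq _)

/-- Multi-iteration local-computation bound (formula (12) in the proof of Theorem 1
of the paper): running `N` local SGD iterations `w_{e+1} = w_e - η • g_e` on the
`L₁`-smooth loss `f`, with `g_e` an adapted, square-integrable stochastic gradient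
whose conditional expectation given the past is `∇f(w_e)` and whose conditional
variance is at most `σ²`, we get
`𝔼[f(w_N)] ≤ f(w₀) - (η - η²L₁/2)·Σ_{e<N} 𝔼‖∇f(w_e)‖² + (Nη²L₁/2)σ²`. -/
theorem multi_step_expected_descent
    {E : Type*} [NormedAddCommGroup E] [InnerProductSpace ℝ E]
    [FiniteDimensional ℝ E]
    (f : E → ℝ) (hf : Differentiable ℝ f)
    (L₁ : ℝ) (hL : 0 < L₁)
    (hlip : ∀ x y : E, ‖gradient f x - gradient f y‖ ≤ L₁ * ‖x - y‖)
    (η : ℝ) (hη : 0 < η) (σ2 : ℝ) (hσ : 0 ≤ σ2)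
    (N : ℕ) (hN : 1 ≤ N)
    {Ω : Type*} {m0 : MeasurableSpace Ω} (μ : Measure Ω) [IsProbabilityMeasure μ]
    (ℱ : Filtration ℕ m0)
    (g : ℕ → Ω → E)
    (hgmeas : ∀ e, StronglyMeasurable[ℱ (e + 1)] (g e))
    (hg2 : ∀ e, MemLp (g e) 2 μ)
    (w₀ : E) (w : ℕ → Ω → E)
    (hw0 : ∀ ω, w 0 ω = w₀)
    (hw : ∀ e ω, w (e + 1) ω = w e ω - η • g e ω)
    (hunb : ∀ e, μ[g e | ℱ e] =ᵐ[μ] fun ω => gradient f (w e ω))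
    (hvar : ∀ e, ∀ᵐ ω ∂μ,
      (μ[fun ω' => ‖g e ω' - gradient f (w e ω')‖ ^ 2 | ℱ e]) ω ≤ σ2) :
    ∫ ω, f (w N ω) ∂μ
      ≤ f w₀
        - (η - η ^ 2 * L₁ / 2) * ∑ e ∈ Finset.range N, ∫ ω, ‖gradient f (w e ω)‖ ^ 2 ∂μ
        + ((N : ℝ) * η ^ 2 * L₁ / 2) * σ2 := by
  -- continuity of the gradient
  have hgrad_lip : LipschitzWith L₁.toNNReal (gradient f) := by
    refine LipschitzWith.of_dist_le_mul fun x y => ?_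
    rw [dist_eq_norm, dist_eq_norm, Real.coe_toNNReal _ hL.le]
    exact hlip x y
  have hgrad_cont : Continuous (gradient f) := hgrad_lip.continuous
  -- measurability and square integrability of the iterates
  have hwmeas : ∀ e, StronglyMeasurable[ℱ e] (w e) := by
    intro e
    induction e with
    | zero =>
      have : w 0 = fun _ => w₀ := funext hw0
      rw [this]; exact stronglyMeasurable_const
    | succ e ih =>
      have : w (e + 1) = fun ω => w e ω - η • g e ω := funext (hw e)
      rw [this]
      exact (ih.mono (ℱ.mono (Nat.le_succ e))).sub ((hgmeas e).const_smul η)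
  have hw2 : ∀ e, MemLp (w e) 2 μ := by
    intro e
    induction e with
    | zero =>
      have : w 0 = fun _ => w₀ := funext hw0
      rw [this]; exact memLp_const w₀
    | succ e ih =>
      have : w (e + 1) = fun ω => w e ω - η • g e ω := funext (hw e)
      rw [this]
      exact ih.sub ((hg2 e).const_smul η)
  -- the gradient process
  set a : ℕ → Ω → E := fun e ω => gradient f (w e ω) with ha_def
  have hameas : ∀ e, StronglyMeasurable[ℱ e] (a e) :=
    fun e => hgrad_cont.comp_stronglyMeasurable (hwmeas e)
  have ha_bound : ∀ (x : E), ‖gradient f x‖ ≤ ‖gradient f 0‖ + L₁ * ‖x‖ := by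
    intro x
    calc ‖gradient f x‖ ≤ ‖gradient f x - gradient f 0‖ + ‖gradient f 0‖ := by
          simpa using norm_add_le (gradient f x - gradient f 0) (gradient f 0)
      _ ≤ L₁ * ‖x - 0‖ + ‖gradient f 0‖ := by gcongr; exact hlip x 0
      _ = ‖gradient f 0‖ + L₁ * ‖x‖ := by rw [sub_zero]; ring
  have ha2 : ∀ e, MemLp (a e) 2 μ := by
    intro e
    refine MemLp.of_le ((memLp_const (‖gradient f 0‖)).add (((hw2 e).norm.const_mul L₁)))
      (((hameas e).mono (ℱ.le e)).aestronglyMeasurable) ?_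
    refine Filter.Eventually.of_forall fun ω => ?_
    have h1 := ha_bound (w e ω)
    have h2 : (0:ℝ) ≤ ‖gradient f 0‖ + L₁ * ‖w e ω‖ := by positivity
    calc ‖a e ω‖ ≤ ‖gradient f 0‖ + L₁ * ‖w e ω‖ := h1
      _ ≤ ‖‖gradient f 0‖ + L₁ * ‖w e ω‖‖ := le_abs_self _
  -- integrability facts
  have hfw_int : ∀ e, Integrable (fun ω => f (w e ω)) μ := by
    intro e
    have hbnd : ∀ x : E, |f x| ≤ |f 0| + ‖gradient f 0‖ * ‖x‖ + (3 * L₁ / 2) * ‖x‖ ^ 2 := by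
      intro x
      have hup := descent_lemma f hf L₁ hL.le hlip 0 x
      have hdown := descent_lemma f hf L₁ hL.le hlip x 0
      rw [sub_zero] at hup
      rw [zero_sub] at hdown
      have e1 : ⟪gradient f 0, x⟫ ≤ ‖gradient f 0‖ * ‖x‖ := real_inner_le_norm _ _
      have e2 : ⟪gradient f x, -x⟫ ≤ ‖gradient f x‖ * ‖x‖ := by
        simpa [norm_neg] using real_inner_le_norm (gradient f x) (-x)
      have e3 := ha_bound x
      have e4 : ‖(-x : E)‖ = ‖x‖ := norm_neg x
      rw [e4] at hdown
      rw [abs_le]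
      constructor
      · nlinarith [norm_nonneg x, mul_le_mul_of_nonneg_right e3 (norm_nonneg x),
          neg_abs_le (f 0)]
      · nlinarith [norm_nonneg x, le_abs_self (f 0)]
    have hintb : Integrable
        (fun ω => |f 0| + ‖gradient f 0‖ * ‖w e ω‖ + (3 * L₁ / 2) * ‖w e ω‖ ^ 2) μ := by
      refine (Integrable.add (integrable_const _) ?_).add ?_
      · exact (((hw2 e).integrable one_le_two).norm.const_mul _)
      · exact ((hw2 e).norm.integrable_sq.const_mul _)
    refine Integrable.mono' hintb
      (hf.continuous.comp_aestronglyMeasurable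
        (((hwmeas e).mono (ℱ.le e)).aestronglyMeasurable)) ?_
    refine Filter.Eventually.of_forall fun ω => ?_
    have := hbnd (w e ω)
    have h2 : (0:ℝ) ≤ |f 0| + ‖gradient f 0‖ * ‖w e ω‖ + (3 * L₁ / 2) * ‖w e ω‖ ^ 2 := by
      positivity
    rw [Real.norm_eq_abs]
    exact this
  have hag_int : ∀ e, Integrable (fun ω => ⟪a e ω, g e ω⟫) μ := by
    intro e
    have hbound : Integrable (fun ω => ‖a e ω‖ ^ 2 + ‖g e ω‖ ^ 2) μ :=
      (ha2 e).norm.integrable_sq.add (hg2 e).norm.integrable_sq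
    refine Integrable.mono' hbound
      ((((hameas e).mono (ℱ.le e)).aestronglyMeasurable).inner (hg2 e).1)
      (Filter.Eventually.of_forall fun ω => ?_)
    have h1 : |⟪a e ω, g e ω⟫| ≤ ‖a e ω‖ * ‖g e ω‖ := abs_real_inner_le_norm _ _
    rw [Real.norm_eq_abs]
    nlinarith [sq_nonneg (‖a e ω‖ - ‖g e ω‖), norm_nonneg (a e ω), norm_nonneg (g e ω)]
  have ha_sq_int : ∀ e, Integrable (fun ω => ‖a e ω‖ ^ 2) μ :=
    fun e => (ha2 e).norm.integrable_sq
  have hg_sq_int : ∀ e, Integrable (fun ω => ‖g e ω‖ ^ 2) μ :=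
    fun e => (hg2 e).norm.integrable_sq
  have hd_sq_int : ∀ e, Integrable (fun ω => ‖g e ω - a e ω‖ ^ 2) μ :=
    fun e => ((hg2 e).sub (ha2 e)).norm.integrable_sq
  -- Key identity (A)
  have hA : ∀ e, ∫ ω, ⟪a e ω, g e ω⟫ ∂μ = ∫ ω, ‖a e ω‖ ^ 2 ∂μ := by
    intro e
    exact integral_inner_condexp_eq (ℱ.le e) (a e) (g e) (hameas e) (ha2 e) (hg2 e) (hunb e)
  -- Key bound (B): conditional variance
  have hB : ∀ e, ∫ ω, ‖g e ω - a e ω‖ ^ 2 ∂μ ≤ σ2 := by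
    intro e
    have h1 : ∫ ω, ‖g e ω - a e ω‖ ^ 2 ∂μ
        = ∫ ω, (μ[fun ω' => ‖g e ω' - gradient f (w e ω')‖ ^ 2 | ℱ e]) ω ∂μ :=
      (integral_condExp (ℱ.le e)).symm
    rw [h1]
    calc ∫ ω, (μ[fun ω' => ‖g e ω' - gradient f (w e ω')‖ ^ 2 | ℱ e]) ω ∂μ
        ≤ ∫ _ω, σ2 ∂μ := integral_mono_ae integrable_condExp (integrable_const σ2) (hvar e)
      _ = σ2 := by simp
  -- Key bound (C)
  have hC : ∀ e, ∫ ω, ‖g e ω‖ ^ 2 ∂μ ≤ σ2 + ∫ ω, ‖a e ω‖ ^ 2 ∂μ := by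
    intro e
    have hpt : ∀ ω, ‖g e ω‖ ^ 2
        = ‖g e ω - a e ω‖ ^ 2 + 2 * ⟪a e ω, g e ω⟫ - ‖a e ω‖ ^ 2 := by
      intro ω
      have := norm_sub_sq_real (g e ω) (a e ω)
      have h2 : ⟪g e ω, a e ω⟫ = ⟪a e ω, g e ω⟫ := real_inner_comm _ _
      linarith
    have h3 : ∫ ω, ‖g e ω‖ ^ 2 ∂μ
        = ∫ ω, ‖g e ω - a e ω‖ ^ 2 ∂μ + 2 * ∫ ω, ⟪a e ω, g e ω⟫ ∂μ
          - ∫ ω, ‖a e ω‖ ^ 2 ∂μ := by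
      have i1 : Integrable (fun ω => 2 * ⟪a e ω, g e ω⟫) μ := (hag_int e).const_mul 2
      have i2 : Integrable (fun ω => ‖g e ω - a e ω‖ ^ 2 + 2 * ⟪a e ω, g e ω⟫) μ :=
        (hd_sq_int e).add i1
      rw [← integral_const_mul, ← integral_add (hd_sq_int e) i1, ← integral_sub i2 (ha_sq_int e)]
      exact integral_congr_ae (Filter.Eventually.of_forall fun ω => hpt ω)
    rw [h3, hA e]
    have := hB e
    linarith
  -- one-step inequality
  have hstep : ∀ e, ∫ ω, f (w (e + 1) ω) ∂μ
      ≤ ∫ ω, f (w e ω) ∂μ - (η - η ^ 2 * L₁ / 2) * ∫ ω, ‖a e ω‖ ^ 2 ∂μ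
        + η ^ 2 * L₁ / 2 * σ2 := by
    intro e
    have hpt : ∀ ω, f (w (e + 1) ω)
        ≤ f (w e ω) - η * ⟪a e ω, g e ω⟫ + η ^ 2 * L₁ / 2 * ‖g e ω‖ ^ 2 := by
      intro ω
      have hd := descent_lemma f hf L₁ hL.le hlip (w e ω) (w (e + 1) ω)
      have hsub : w (e + 1) ω - w e ω = -(η • g e ω) := by rw [hw e ω]; abel
      rw [hsub] at hd
      have hin : ⟪gradient f (w e ω), -(η • g e ω)⟫ = -(η * ⟪a e ω, g e ω⟫) := by
        rw [inner_neg_right, real_inner_smul_right]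
      have hnrm : ‖-(η • g e ω)‖ ^ 2 = η ^ 2 * ‖g e ω‖ ^ 2 := by
        rw [norm_neg, norm_smul, Real.norm_eq_abs, mul_pow, sq_abs]
      rw [hin, hnrm] at hd
      calc f (w (e + 1) ω) ≤ f (w e ω) + -(η * ⟪a e ω, g e ω⟫)
            + L₁ / 2 * (η ^ 2 * ‖g e ω‖ ^ 2) := hd
        _ = f (w e ω) - η * ⟪a e ω, g e ω⟫ + η ^ 2 * L₁ / 2 * ‖g e ω‖ ^ 2 := by ring
    have hrhs_int : Integrable
        (fun ω => f (w e ω) - η * ⟪a e ω, g e ω⟫ + η ^ 2 * L₁ / 2 * ‖g e ω‖ ^ 2) μ :=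
      ((hfw_int e).sub ((hag_int e).const_mul η)).add ((hg_sq_int e).const_mul _)
    have h4 : ∫ ω, f (w (e + 1) ω) ∂μ
        ≤ ∫ ω, (f (w e ω) - η * ⟪a e ω, g e ω⟫ + η ^ 2 * L₁ / 2 * ‖g e ω‖ ^ 2) ∂μ :=
      integral_mono (hfw_int (e + 1)) hrhs_int hpt
    have h5 : ∫ ω, (f (w e ω) - η * ⟪a e ω, g e ω⟫ + η ^ 2 * L₁ / 2 * ‖g e ω‖ ^ 2) ∂μ
        = ∫ ω, f (w e ω) ∂μ - η * ∫ ω, ⟪a e ω, g e ω⟫ ∂μ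
          + η ^ 2 * L₁ / 2 * ∫ ω, ‖g e ω‖ ^ 2 ∂μ := by
      have i1 : Integrable (fun ω => η * ⟪a e ω, g e ω⟫) μ := (hag_int e).const_mul η
      have i2 : Integrable (fun ω => f (w e ω) - η * ⟪a e ω, g e ω⟫) μ := (hfw_int e).sub i1
      have i3 : Integrable (fun ω => η ^ 2 * L₁ / 2 * ‖g e ω‖ ^ 2) μ :=
        (hg_sq_int e).const_mul _
      rw [integral_add i2 i3, integral_sub (hfw_int e) i1, integral_const_mul, integral_const_mul]
    rw [h5, hA e] at h4
    have h6 := hC e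
    have h7 : (0:ℝ) ≤ η ^ 2 * L₁ / 2 := by positivity
    nlinarith [mul_le_mul_of_nonneg_left h6 h7]
  -- telescoping induction
  have main : ∀ n : ℕ, ∫ ω, f (w n ω) ∂μ
      ≤ f w₀ - (η - η ^ 2 * L₁ / 2) * ∑ e ∈ Finset.range n, ∫ ω, ‖a e ω‖ ^ 2 ∂μ
        + (n : ℝ) * (η ^ 2 * L₁ / 2 * σ2) := by
    intro n
    induction n with
    | zero =>
      simp only [Finset.range_zero, Finset.sum_empty, Nat.cast_zero, mul_zero, zero_mul,
        sub_zero, add_zero]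
      have : ∀ ω, f (w 0 ω) = f w₀ := fun ω => by rw [hw0 ω]
      rw [integral_congr_ae (Filter.Eventually.of_forall this)]
      simp
    | succ n ih =>
      have := hstep n
      rw [Finset.sum_range_succ]
      push_cast
      nlinarith [this, ih]
  have := main N
  calc ∫ ω, f (w N ω) ∂μ
      ≤ f w₀ - (η - η ^ 2 * L₁ / 2) * ∑ e ∈ Finset.range N, ∫ ω, ‖a e ω‖ ^ 2 ∂μ
        + (N : ℝ) * (η ^ 2 * L₁ / 2 * σ2) := this
    _ = f w₀ - (η - η ^ 2 * L₁ / 2) * ∑ e ∈ Finset.range N, ∫ ω, ‖gradient f (w e ω)‖ ^ 2 ∂μ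
        + ((N : ℝ) * η ^ 2 * L₁ / 2) * σ2 := by rw [ha_def]; ring
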